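/- Let N ∈ ℕ and let p : {1,…,d} × {0,…,N} → ℝ satisfy, for all i and all m ∈ {0,…,N}, the stationary balance equations 0 = Σ_{j=1}^d p_j(m) q_{ji} + p_i(m+1) μ_i (m+1) + p_i(m−1) λ_i (N−m+1) − p_i(m) μ_i m − p_i(m) λ_i (N−m), with the conventions p_i(−1) = p_i(N+1) = 0. Define the row vectors e_k with (e_k)_i := Σ_{m=0}^N (m)_k · p_i(m), where (m)_k := m(m−1)⋯(m−k+1) is the falling factorial. Then for every k with 2 ≤ k ≤ N one has e_k^T(kΛ + kM − Q) = k(N−k+1)·e_{k−1}^T Λ. -/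

import Mathlib

open Matrix

private lemma dF1 (m k : ℕ) : (m.descFactorial (k+1) : ℝ) = ((m:ℝ) - k) * m.descFactorial k := by
  rcases le_or_gt k m with h | h
  · rw [Nat.descFactorial_succ]
    push_cast [h]
    ring
  · rw [Nat.descFactorial_eq_zero_iff_lt.2 h,
      Nat.descFactorial_eq_zero_iff_lt.2 (Nat.lt_succ_of_lt h)]
    simp

private lemma dF2 (m k : ℕ) : (((m+1).descFactorial (k+1) : ℕ) : ℝ)
    = m.descFactorial (k+1) + (k+1) * m.descFactorial k := by
  rw [Nat.succ_descFactorial_succ, dF1]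
  push_cast
  ring

private lemma dF3 (m k : ℕ) : (m:ℝ) * ((m-1).descFactorial k : ℝ) = m.descFactorial (k+1) := by
  cases m with
  | zero => simp
  | succ n =>
    rw [Nat.succ_sub_one, Nat.succ_descFactorial_succ]
    push_cast
    ring

private lemma shiftA (N : ℕ) (h : ℕ → ℝ) (q : ℤ → ℝ) (h0 : h 0 = 0) (hq : q ((N:ℤ)+1) = 0) :
    ∑ m ∈ Finset.range (N+1), h (m+1) * q ((m:ℤ)+1)
      = ∑ m ∈ Finset.range (N+1), h m * q (m:ℤ) := by
  have e1 := Finset.sum_range_succ' (fun m => h m * q (m:ℤ)) (N+1)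
  have e2 := Finset.sum_range_succ (fun m => h m * q (m:ℤ)) (N+1)
  push_cast at e1 e2
  rw [h0] at e1
  rw [hq] at e2
  rw [e2] at e1
  linarith [e1]

private lemma shiftB (N : ℕ) (h : ℕ → ℝ) (q : ℤ → ℝ) (hN : h (N+1) = 0) (hq : q (-1) = 0) :
    ∑ m ∈ Finset.range (N+1), h m * q ((m:ℤ)-1)
      = ∑ m ∈ Finset.range (N+1), h (m+1) * q (m:ℤ) := by
  have e1 := Finset.sum_range_succ' (fun m => h m * q ((m:ℤ)-1)) N
  have e2 := Finset.sum_range_succ (fun m => h (m+1) * q (m:ℤ)) N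
  push_cast at e1 e2
  rw [hq] at e1
  rw [hN] at e2
  rw [e1, e2]
  simp

private lemma termid (j m N : ℕ) (a b P : ℝ) :
    (m.descFactorial (j+1) : ℝ) * P * ((j+1:ℝ) * a)
      + (m.descFactorial (j+1) : ℝ) * P * ((j+1:ℝ) * b)
      - ((m.descFactorial (j+1) : ℝ) * (P * b * (m:ℝ))
          + (m.descFactorial (j+1) : ℝ) * (P * a * ((N:ℝ) - (m:ℝ)))
          - b * (m.descFactorial (j+2) : ℝ) * P
          - ((m+1).descFactorial (j+1) : ℝ) * (a * ((N:ℝ) - (m:ℝ))) * P)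
    = ((j+1:ℝ) * ((N:ℝ) - ((j:ℝ)+1) + 1)) * ((m.descFactorial j : ℝ) * P * a) := by
  have h2 := dF2 m j
  have h4 := dF1 m (j+1)
  have h1 := dF1 m j
  rw [h2, h4, h1]
  push_cast
  ring

theorem stmt_7
    (d : ℕ) (hd : 1 ≤ d)
    (Q : Matrix (Fin d) (Fin d) ℝ) (lam mu : Fin d → ℝ)
    (hQoff : ∀ i j, i ≠ j → 0 ≤ Q i j)
    (hQrow : ∀ i, ∑ j, Q i j = 0)
    (hlam : ∀ i, 0 ≤ lam i) (hmu : ∀ i, 0 ≤ mu i)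
    (N : ℕ) (p : Fin d → ℤ → ℝ)
    (hp0 : ∀ (i : Fin d) (m : ℤ), m < 0 ∨ (N : ℤ) < m → p i m = 0)
    (hbal : ∀ (i : Fin d) (m : ℤ), 0 ≤ m → m ≤ (N : ℤ) →
      0 = (∑ j, p j m * Q j i) + p i (m + 1) * mu i * ((m : ℝ) + 1)
          + p i (m - 1) * lam i * ((N : ℝ) - (m : ℝ) + 1)
          - p i m * mu i * (m : ℝ) - p i m * lam i * ((N : ℝ) - (m : ℝ))) :
    ∀ k : ℕ, 2 ≤ k → k ≤ N →
      Matrix.vecMul (fun i => ∑ m ∈ Finset.range (N + 1), (m.descFactorial k : ℝ) * p i (m : ℤ))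
          ((k : ℝ) • Matrix.diagonal lam + (k : ℝ) • Matrix.diagonal mu - Q)
        = ((k : ℝ) * ((N : ℝ) - (k : ℝ) + 1)) •
            Matrix.vecMul
              (fun i => ∑ m ∈ Finset.range (N + 1), (m.descFactorial (k - 1) : ℝ) * p i (m : ℤ))
              (Matrix.diagonal lam) := by
  intro k hk2 hkN
  obtain ⟨j, rfl⟩ : ∃ j, k = j + 1 := ⟨k - 1, by omega⟩
  funext i
  simp only [Pi.smul_apply, smul_eq_mul, Nat.add_sub_cancel,
    Matrix.vecMul, dotProduct, Matrix.sub_apply, Matrix.add_apply,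
    Matrix.smul_apply, Matrix.diagonal_apply,
    mul_ite, mul_zero, ite_mul, zero_mul, mul_sub, mul_add, Finset.sum_sub_distrib,
    Finset.sum_add_distrib, Finset.sum_ite_eq', Finset.mem_univ, if_true]
  -- goal should now be a scalar identity
  have hpN1 : p i ((N:ℤ)+1) = 0 := hp0 i _ (Or.inr (by omega))
  have hpneg : p i (-1) = 0 := hp0 i _ (Or.inl (by norm_num))
  -- Step 1: swap sums in the Q part
  have key : ∑ x : Fin d, (∑ m ∈ Finset.range (N+1), (m.descFactorial (j+1):ℝ) * p x (m:ℤ)) * Q x i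
      = ∑ m ∈ Finset.range (N+1), (m.descFactorial (j+1):ℝ) * ∑ x : Fin d, p x (m:ℤ) * Q x i := by
    simp_rw [Finset.sum_mul, Finset.mul_sum, mul_assoc]
    rw [Finset.sum_comm]
  -- Step 2: balance equations, rearranged
  have hbal' : ∀ m ∈ Finset.range (N+1),
      (m.descFactorial (j+1):ℝ) * ∑ x : Fin d, p x (m:ℤ) * Q x i
        = (m.descFactorial (j+1):ℝ) * (p i (m:ℤ) * mu i * (m:ℝ))
          + (m.descFactorial (j+1):ℝ) * (p i (m:ℤ) * lam i * ((N:ℝ) - (m:ℝ)))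
          - (m.descFactorial (j+1):ℝ) * (p i ((m:ℤ)+1) * mu i * ((m:ℝ)+1))
          - (m.descFactorial (j+1):ℝ) * (p i ((m:ℤ)-1) * lam i * ((N:ℝ) - (m:ℝ)+1)) := by
    intro m hm
    rw [Finset.mem_range] at hm
    have hb := hbal i (m:ℤ) (by positivity) (by omega)
    push_cast at hb
    have : ∑ x : Fin d, p x (m:ℤ) * Q x i
        = p i (m:ℤ) * mu i * (m:ℝ) + p i (m:ℤ) * lam i * ((N:ℝ) - (m:ℝ))
          - p i ((m:ℤ)+1) * mu i * ((m:ℝ)+1) - p i ((m:ℤ)-1) * lam i * ((N:ℝ) - (m:ℝ)+1) := by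
      linarith [hb]
    rw [this]
    ring
  -- Step 3: shift the (m+1) sum
  have hT1 : ∑ m ∈ Finset.range (N+1),
        (m.descFactorial (j+1):ℝ) * (p i ((m:ℤ)+1) * mu i * ((m:ℝ)+1))
      = ∑ m ∈ Finset.range (N+1), mu i * (m.descFactorial (j+2):ℝ) * p i (m:ℤ) := by
    have := shiftA N (fun m => ((m-1).descFactorial (j+1) : ℝ) * (mu i * (m:ℝ))) (p i)
      (by simp) hpN1
    simp only [Nat.add_sub_cancel] at this
    calc ∑ m ∈ Finset.range (N+1), (m.descFactorial (j+1):ℝ) * (p i ((m:ℤ)+1) * mu i * ((m:ℝ)+1))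
        = ∑ m ∈ Finset.range (N+1),
            (m.descFactorial (j+1):ℝ) * (mu i * ((m:ℝ)+1)) * p i ((m:ℤ)+1) := by
          apply Finset.sum_congr rfl; intro m _; push_cast; ring
      _ = ∑ m ∈ Finset.range (N+1),
            ((m-1).descFactorial (j+1):ℝ) * (mu i * (m:ℝ)) * p i (m:ℤ) := by
          rw [← this]; apply Finset.sum_congr rfl; intro m _; push_cast; ring
      _ = ∑ m ∈ Finset.range (N+1), mu i * (m.descFactorial (j+2):ℝ) * p i (m:ℤ) := by
          apply Finset.sum_congr rfl; intro m _
          rw [← dF3 m (j+1)]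
          ring
  -- Step 4: shift the (m-1) sum
  have hT2 : ∑ m ∈ Finset.range (N+1),
        (m.descFactorial (j+1):ℝ) * (p i ((m:ℤ)-1) * lam i * ((N:ℝ) - (m:ℝ)+1))
      = ∑ m ∈ Finset.range (N+1),
          ((m+1).descFactorial (j+1):ℝ) * (lam i * ((N:ℝ) - (m:ℝ))) * p i (m:ℤ) := by
    have := shiftB N (fun m => (m.descFactorial (j+1):ℝ) * (lam i * ((N:ℝ) - (m:ℝ)+1))) (p i)
      (by push_cast; ring) hpneg
    calc ∑ m ∈ Finset.range (N+1), (m.descFactorial (j+1):ℝ) * (p i ((m:ℤ)-1) * lam i * ((N:ℝ) - (m:ℝ)+1))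
        = ∑ m ∈ Finset.range (N+1),
            (m.descFactorial (j+1):ℝ) * (lam i * ((N:ℝ) - (m:ℝ)+1)) * p i ((m:ℤ)-1) := by
          apply Finset.sum_congr rfl; intro m _; ring
      _ = ∑ m ∈ Finset.range (N+1),
            ((m+1).descFactorial (j+1):ℝ) * (lam i * ((N:ℝ) - ((m:ℝ)+1)+1)) * p i (m:ℤ) := by
          rw [this]; apply Finset.sum_congr rfl; intro m _; push_cast; ring
      _ = ∑ m ∈ Finset.range (N+1),
            ((m+1).descFactorial (j+1):ℝ) * (lam i * ((N:ℝ) - (m:ℝ))) * p i (m:ℤ) := by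
          apply Finset.sum_congr rfl; intro m _; ring_nf
  -- Put it all together
  rw [key, Finset.sum_congr rfl hbal']
  simp only [Finset.sum_sub_distrib, Finset.sum_add_distrib]
  rw [hT1, hT2]
  rw [Finset.sum_mul, Finset.sum_mul, Finset.sum_mul, Finset.mul_sum]
  simp only [← Finset.sum_sub_distrib, ← Finset.sum_add_distrib]
  apply Finset.sum_congr rfl
  intro m _
  have h2 := dF2 m j
  have h4 : (m.descFactorial (j+2) : ℝ) = ((m:ℝ) - ((j:ℝ)+1)) * m.descFactorial (j+1) := by
    have := dF1 m (j+1); push_cast at this; exact this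
  have h1 := dF1 m j
  push_cast at h2 h1 ⊢
  linear_combination (mu i * p i (m:ℤ)) * h4 + (lam i * ((N:ℝ) - (m:ℝ)) * p i (m:ℤ)) * h2
    + ((j:ℝ)+1) * lam i * p i (m:ℤ) * h1
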